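/- (Combined variance bound in the proof of Theorem 1.) Assume the δ-similarity condition. Fix permutations π and π' of {1,…,n}. Let w¹_prev, …, wⁿ_prev ∈ ℝ^d be arbitrary points, let w_s ∈ ℝ^d, and set v_s = (1/n)·Σ_{i=1}^{n} ∇f_{π(i)}(wⁱ_prev). Let w¹, …, wⁿ ∈ ℝ^d be arbitrary points, set w⁰ = w_s, v⁰ = v_s, and define recursively vⁱ = v^{i−1} + ∇f_{π'(i)}(wⁱ) − ∇f_{π'(i)}(w^{i−1}) for i = 1,…,n. Then ‖∇P(w_s) − (1/(n+1))·Σ_{i=0}^{n} vⁱ‖² ≤ (4L²/(n+1) + 4δ²n)·Σ_{i=1}^{n} ‖wⁱ − w_s‖² + (2L²/n)·Σ_{i=1}^{n} ‖wⁱ_prev − w_s‖². -/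

import Mathlib

open scoped BigOperators

lemma gradient_avg_eq {d n : ℕ} (f : Fin n → EuclideanSpace ℝ (Fin d) → ℝ)
    (hdiff : ∀ i, Differentiable ℝ (f i)) (w : EuclideanSpace ℝ (Fin d)) :
    gradient (fun w => (1 / (n : ℝ)) * ∑ i, f i w) w
      = (1 / (n : ℝ)) • ∑ i, gradient (f i) w := by
  have h1 : HasFDerivAt (fun w => ∑ i, f i w)
      (∑ i, (InnerProductSpace.toDual ℝ _) (gradient (f i) w)) w :=
    HasFDerivAt.fun_sum fun i _ => ((hdiff i w).hasGradientAt).hasFDerivAt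
  have h2 := h1.const_mul (1 / (n : ℝ))
  have h3 : ((1 / (n : ℝ)) • ∑ i, (InnerProductSpace.toDual ℝ _) (gradient (f i) w))
      = (InnerProductSpace.toDual ℝ _) ((1 / (n : ℝ)) • ∑ i, gradient (f i) w) := by
    rw [map_smul, map_sum]
  rw [h3] at h2
  exact (hasGradientAt_iff_hasFDerivAt.mpr h2).gradient

set_option maxHeartbeats 1000000 in
lemma core_variance_bound {E : Type*} [NormedAddCommGroup E] [NormedSpace ℝ E]
    {n : ℕ} (hn : 1 ≤ n)
    (g : Fin n → E → E) (gP : E → E)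
    (L δ : ℝ) (hL : 0 < L) (hδ : 0 < δ)
    (hgP : ∀ w, gP w = (1 / (n : ℝ)) • ∑ i, g i w)
    (hLip : ∀ i w₁ w₂, ‖g i w₁ - g i w₂‖ ≤ L * ‖w₁ - w₂‖)
    (hsim : ∀ i w₁ w₂, ‖(g i w₁ - gP w₁) - (g i w₂ - gP w₂)‖ ≤ (δ / 2) * ‖w₁ - w₂‖)
    (π π' : Equiv.Perm (Fin n))
    (Wprev : Fin n → E) (ws vs : E)
    (hvs : vs = (1 / (n : ℝ)) • ∑ i : Fin n, g (π i) (Wprev i))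
    (W V : ℕ → E)
    (hW0 : W 0 = ws) (hV0 : V 0 = vs)
    (hVrec : ∀ i : Fin n, V ((i : ℕ) + 1)
      = V i + g (π' i) (W ((i : ℕ) + 1)) - g (π' i) (W i)) :
    ‖gP ws - (1 / ((n : ℝ) + 1)) • ∑ i ∈ Finset.range (n + 1), V i‖ ^ 2
      ≤ (4 * L ^ 2 / ((n : ℝ) + 1) + 4 * δ ^ 2 * n)
          * ∑ i ∈ Finset.range n, ‖W (i + 1) - ws‖ ^ 2
        + (2 * L ^ 2 / (n : ℝ)) * ∑ i : Fin n, ‖Wprev i - ws‖ ^ 2 := by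
  have hn' : (0:ℝ) < (n:ℝ) := by exact_mod_cast hn
  have hn1 : (0:ℝ) < (n:ℝ) + 1 := by positivity
  -- Lipschitzness of gP
  have hPlip : ∀ w₁ w₂, ‖gP w₁ - gP w₂‖ ≤ L * ‖w₁ - w₂‖ := by
    intro w₁ w₂
    rw [hgP w₁, hgP w₂, ← smul_sub, ← Finset.sum_sub_distrib, norm_smul]
    have h1 : ‖∑ i : Fin n, (g i w₁ - g i w₂)‖
        ≤ ∑ _i : Fin n, (L * ‖w₁ - w₂‖) :=
      norm_sum_le_of_le _ (fun i _ => hLip i w₁ w₂)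
    have h2 : ∑ _i : Fin n, (L * ‖w₁ - w₂‖) = (n:ℝ) * (L * ‖w₁ - w₂‖) := by
      simp [Finset.sum_const, Finset.card_univ, nsmul_eq_mul]
    have h3 : ‖(1 / (n:ℝ))‖ = 1 / (n:ℝ) := by
      rw [Real.norm_eq_abs, abs_of_pos]; positivity
    rw [h3]
    calc (1 / (n:ℝ)) * ‖∑ i : Fin n, (g i w₁ - g i w₂)‖
        ≤ (1 / (n:ℝ)) * ((n:ℝ) * (L * ‖w₁ - w₂‖)) := by
          apply mul_le_mul_of_nonneg_left _ (by positivity)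
          rw [← h2]; exact h1
      _ = L * ‖w₁ - w₂‖ := by field_simp
  -- closed form for V
  set D : ℕ → E := fun j =>
    if h : j < n then g (π' ⟨j, h⟩) (W (j+1)) - g (π' ⟨j, h⟩) (W j)
    else 0 with hD
  have hVform : ∀ k, k ≤ n → V k = vs + ∑ j ∈ Finset.range k, D j := by
    intro k hk
    induction k with
    | zero => simp [hV0]
    | succ m ih =>
      have hm : m < n := hk
      have hrec : V (m + 1) = V m + g (π' ⟨m, hm⟩) (W (m + 1))
          - g (π' ⟨m, hm⟩) (W m) := hVrec ⟨m, hm⟩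
      have hDm : D m = g (π' ⟨m, hm⟩) (W (m+1)) - g (π' ⟨m, hm⟩) (W m) := by
        simp [hD, dif_pos hm]
      rw [hrec, ih hm.le, Finset.sum_range_succ, hDm]
      abel
  -- residuals
  set r : ℕ → E := fun j => D j - (gP (W (j+1)) - gP (W j)) with hrdef
  have hrle : ∀ j, j < n → ‖r j‖ ≤ (δ/2) * (‖W (j+1) - ws‖ + ‖W j - ws‖) := by
    intro j hj
    have h1 := hsim (π' ⟨j, hj⟩) (W (j+1)) (W j)
    have h2 : r j = (g (π' ⟨j, hj⟩) (W (j+1)) - gP (W (j+1)))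
        - (g (π' ⟨j, hj⟩) (W j) - gP (W j)) := by
      simp only [hrdef, hD, dif_pos hj]; abel
    rw [h2]
    refine h1.trans ?_
    have h3 : ‖W (j+1) - W j‖ ≤ ‖W (j+1) - ws‖ + ‖W j - ws‖ := by
      have h4 : W (j+1) - W j = (W (j+1) - ws) - (W j - ws) := by abel
      rw [h4]; exact norm_sub_le _ _
    have h5 : (0:ℝ) ≤ δ/2 := by positivity
    exact mul_le_mul_of_nonneg_left h3 h5
  -- decomposition of gP ws - V k
  have hu : ∀ k, k ≤ n → gP ws - V k
      = (gP ws - vs) + (gP ws - gP (W k)) - ∑ j ∈ Finset.range k, r j := by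
    intro k hk
    have h1 := hVform k hk
    have h3 : ∑ j ∈ Finset.range k, (gP (W (j+1)) - gP (W j)) = gP (W k) - gP (W 0) :=
      Finset.sum_range_sub (fun j => gP (W j)) k
    have h2 : ∑ j ∈ Finset.range k, D j
        = (∑ j ∈ Finset.range k, r j) + (gP (W k) - gP (W 0)) := by
      calc ∑ j ∈ Finset.range k, D j
          = ∑ j ∈ Finset.range k, (r j + (gP (W (j+1)) - gP (W j))) := by
            refine Finset.sum_congr rfl (fun j _ => ?_)
            simp only [hrdef]; abel
        _ = _ := by rw [Finset.sum_add_distrib, h3]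
    rw [h1, h2, hW0]; abel
  -- expressing the target vector
  have hXeq : gP ws - (1 / ((n:ℝ)+1)) • ∑ i ∈ Finset.range (n+1), V i
      = (1 / ((n:ℝ)+1)) • ∑ i ∈ Finset.range (n+1), (gP ws - V i) := by
    rw [Finset.sum_sub_distrib, smul_sub, Finset.sum_const, Finset.card_range]
    congr 1
    rw [← Nat.cast_smul_eq_nsmul ℝ, smul_smul]
    have h : (1 / ((n:ℝ)+1)) * ((n+1 : ℕ) : ℝ) = 1 := by
      push_cast; field_simp
    rw [h, one_smul]
  have hXsum : ∑ i ∈ Finset.range (n+1), (gP ws - V i)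
      = ∑ i ∈ Finset.range (n+1),
          ((gP ws - vs) + (gP ws - gP (W i)) - ∑ j ∈ Finset.range i, r j) :=
    Finset.sum_congr rfl (fun i hi => hu i (Nat.lt_succ_iff.mp (Finset.mem_range.mp hi)))
  have hSb0 : (0:ℝ) ≤ ∑ i ∈ Finset.range n, ‖W (i+1) - ws‖ :=
    Finset.sum_nonneg (fun _ _ => norm_nonneg _)
  have hS0 : (0:ℝ) ≤ ∑ i ∈ Finset.range n, ‖W (i+1) - ws‖^2 :=
    Finset.sum_nonneg (fun _ _ => sq_nonneg _)
  have hT0 : (0:ℝ) ≤ ∑ i : Fin n, ‖Wprev i - ws‖^2 :=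
    Finset.sum_nonneg (fun _ _ => sq_nonneg _)
  have hWsum : ∑ i ∈ Finset.range (n+1), ‖W i - ws‖
      = ∑ i ∈ Finset.range n, ‖W (i+1) - ws‖ := by
    rw [Finset.sum_range_succ']
    simp [hW0]
  -- per-term bound
  have hterm : ∀ i ∈ Finset.range (n+1),
      ‖(gP ws - vs) + (gP ws - gP (W i)) - ∑ j ∈ Finset.range i, r j‖
        ≤ ‖gP ws - vs‖ + L * ‖W i - ws‖
          + δ * ∑ i ∈ Finset.range n, ‖W (i+1) - ws‖ := by
    intro i hi
    have hi' : i ≤ n := Nat.lt_succ_iff.mp (Finset.mem_range.mp hi)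
    have t1 : ‖(gP ws - vs) + (gP ws - gP (W i)) - ∑ j ∈ Finset.range i, r j‖
        ≤ ‖gP ws - vs‖ + ‖gP ws - gP (W i)‖ + ‖∑ j ∈ Finset.range i, r j‖ := by
      refine (norm_sub_le _ _).trans ?_
      exact add_le_add (norm_add_le _ _) le_rfl
    have t2 : ‖gP ws - gP (W i)‖ ≤ L * ‖W i - ws‖ := by
      calc ‖gP ws - gP (W i)‖ ≤ L * ‖ws - W i‖ := hPlip _ _
        _ = L * ‖W i - ws‖ := by rw [norm_sub_rev]
    have t3 : ‖∑ j ∈ Finset.range i, r j‖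
        ≤ δ * ∑ i ∈ Finset.range n, ‖W (i+1) - ws‖ := by
      have t4 : ‖∑ j ∈ Finset.range i, r j‖
          ≤ ∑ j ∈ Finset.range i, ((δ/2) * (‖W (j+1) - ws‖ + ‖W j - ws‖)) :=
        norm_sum_le_of_le _
          (fun j hj => hrle j (lt_of_lt_of_le (Finset.mem_range.mp hj) hi'))
      have t5 : ∑ j ∈ Finset.range i, ((δ/2) * (‖W (j+1) - ws‖ + ‖W j - ws‖))
          ≤ ∑ j ∈ Finset.range n, ((δ/2) * (‖W (j+1) - ws‖ + ‖W j - ws‖)) := by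
        apply Finset.sum_le_sum_of_subset_of_nonneg (Finset.range_subset_range.mpr hi')
        intro j _ _; positivity
      have t7 : ∑ j ∈ Finset.range n, ‖W j - ws‖
          ≤ ∑ i ∈ Finset.range n, ‖W (i+1) - ws‖ := by
        have t8 : ∑ j ∈ Finset.range n, ‖W j - ws‖
            ≤ ∑ j ∈ Finset.range (n+1), ‖W j - ws‖ :=
          Finset.sum_le_sum_of_subset_of_nonneg
            (Finset.range_subset_range.mpr (Nat.le_succ n)) (fun _ _ _ => norm_nonneg _)
        rw [hWsum] at t8; exact t8
      have t6 : ∑ j ∈ Finset.range n, ((δ/2) * (‖W (j+1) - ws‖ + ‖W j - ws‖))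
          ≤ δ * ∑ i ∈ Finset.range n, ‖W (i+1) - ws‖ := by
        rw [← Finset.mul_sum, Finset.sum_add_distrib]
        nlinarith [hδ.le]
      linarith
    linarith
  -- full norm bound
  have hnorm : ‖gP ws - (1 / ((n:ℝ)+1)) • ∑ i ∈ Finset.range (n+1), V i‖
      ≤ ‖gP ws - vs‖ + (L / ((n:ℝ)+1)) * ∑ i ∈ Finset.range n, ‖W (i+1) - ws‖
        + δ * ∑ i ∈ Finset.range n, ‖W (i+1) - ws‖ := by
    rw [hXeq, norm_smul, hXsum]
    have hc : ‖(1 / ((n:ℝ)+1))‖ = 1 / ((n:ℝ)+1) := by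
      rw [Real.norm_eq_abs, abs_of_pos]; positivity
    rw [hc]
    have hsum : ‖∑ i ∈ Finset.range (n+1),
          ((gP ws - vs) + (gP ws - gP (W i)) - ∑ j ∈ Finset.range i, r j)‖
        ≤ ∑ i ∈ Finset.range (n+1), (‖gP ws - vs‖ + L * ‖W i - ws‖
            + δ * ∑ i ∈ Finset.range n, ‖W (i+1) - ws‖) :=
      norm_sum_le_of_le _ hterm
    have hsum2 : ∑ i ∈ Finset.range (n+1), (‖gP ws - vs‖ + L * ‖W i - ws‖
            + δ * ∑ i ∈ Finset.range n, ‖W (i+1) - ws‖)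
        = ((n:ℝ)+1) * (‖gP ws - vs‖ + δ * ∑ i ∈ Finset.range n, ‖W (i+1) - ws‖)
          + L * ∑ i ∈ Finset.range n, ‖W (i+1) - ws‖ := by
      rw [Finset.sum_add_distrib, Finset.sum_add_distrib, Finset.sum_const,
        Finset.card_range, ← Finset.mul_sum, hWsum, Finset.sum_const, Finset.card_range]
      push_cast
      ring
    calc (1 / ((n:ℝ)+1)) * ‖∑ i ∈ Finset.range (n+1),
          ((gP ws - vs) + (gP ws - gP (W i)) - ∑ j ∈ Finset.range i, r j)‖
        ≤ (1 / ((n:ℝ)+1)) * (((n:ℝ)+1) * (‖gP ws - vs‖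
            + δ * ∑ i ∈ Finset.range n, ‖W (i+1) - ws‖)
            + L * ∑ i ∈ Finset.range n, ‖W (i+1) - ws‖) := by
          apply mul_le_mul_of_nonneg_left _ (by positivity)
          rw [← hsum2]; exact hsum
      _ = _ := by field_simp; ring
  -- square bounds
  have hSb2 : (∑ i ∈ Finset.range n, ‖W (i+1) - ws‖)^2
      ≤ (n:ℝ) * ∑ i ∈ Finset.range n, ‖W (i+1) - ws‖^2 := by
    have := sq_sum_le_card_mul_sum_sq (s := Finset.range n)
      (f := fun i : ℕ => ‖W (i+1) - ws‖)
    simpa using this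
  have hA2 : ‖gP ws - vs‖^2 ≤ (L^2 / (n:ℝ)) * ∑ i : Fin n, ‖Wprev i - ws‖^2 := by
    have hSt0 : (0:ℝ) ≤ ∑ i : Fin n, ‖Wprev i - ws‖ :=
      Finset.sum_nonneg (fun _ _ => norm_nonneg _)
    have hSt2 : (∑ i : Fin n, ‖Wprev i - ws‖)^2
        ≤ (n:ℝ) * ∑ i : Fin n, ‖Wprev i - ws‖^2 := by
      have := sq_sum_le_card_mul_sum_sq (s := (Finset.univ : Finset (Fin n)))
        (f := fun i => ‖Wprev i - ws‖)
      simpa using this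
    have hA1 : (n:ℝ) * ‖gP ws - vs‖ ≤ L * ∑ i : Fin n, ‖Wprev i - ws‖ := by
      have hgPws : gP ws - vs
          = (1 / (n:ℝ)) • ∑ i : Fin n, (g (π i) ws - g (π i) (Wprev i)) := by
        rw [hgP ws, hvs, ← smul_sub]
        congr 1
        rw [Finset.sum_sub_distrib]
        congr 1
        exact (Equiv.sum_comp π (fun i => g i ws)).symm
      have h5 : ‖gP ws - vs‖ ≤ (1 / (n:ℝ)) * (L * ∑ i : Fin n, ‖Wprev i - ws‖) := by
        rw [hgPws, norm_smul]
        have hc : ‖(1 / (n:ℝ))‖ = 1 / (n:ℝ) := by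
          rw [Real.norm_eq_abs, abs_of_pos]; positivity
        rw [hc]
        apply mul_le_mul_of_nonneg_left _ (by positivity)
        calc ‖∑ i : Fin n, (g (π i) ws - g (π i) (Wprev i))‖
            ≤ ∑ i : Fin n, (L * ‖Wprev i - ws‖) := by
              refine norm_sum_le_of_le _ (fun i _ => ?_)
              calc ‖g (π i) ws - g (π i) (Wprev i)‖
                  ≤ L * ‖ws - Wprev i‖ := hLip _ _ _
                _ = L * ‖Wprev i - ws‖ := by rw [norm_sub_rev]
          _ = L * ∑ i : Fin n, ‖Wprev i - ws‖ := by rw [← Finset.mul_sum]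
      have h7 := mul_le_mul_of_nonneg_left h5 hn'.le
      calc (n:ℝ) * ‖gP ws - vs‖
          ≤ (n:ℝ) * ((1 / (n:ℝ)) * (L * ∑ i : Fin n, ‖Wprev i - ws‖)) := h7
        _ = L * ∑ i : Fin n, ‖Wprev i - ws‖ := by field_simp
    have hA0 : (0:ℝ) ≤ ‖gP ws - vs‖ := norm_nonneg _
    have h6 : ((n:ℝ) * ‖gP ws - vs‖)^2
        ≤ L^2 * ((n:ℝ) * ∑ i : Fin n, ‖Wprev i - ws‖^2) := by
      nlinarith [hSt2, hL.le, hSt0,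
        mul_le_mul hA1 hA1 (by positivity) (by positivity)]
    rw [div_mul_eq_mul_div, le_div_iff₀ hn']
    nlinarith [h6]
  have hB2 : ((L / ((n:ℝ)+1)) * ∑ i ∈ Finset.range n, ‖W (i+1) - ws‖)^2
      ≤ (L^2 / ((n:ℝ)+1)) * ∑ i ∈ Finset.range n, ‖W (i+1) - ws‖^2 := by
    rw [mul_pow, div_pow, div_mul_eq_mul_div, div_mul_eq_mul_div,
      div_le_div_iff₀ (by positivity) (by positivity)]
    nlinarith [hSb2, hS0, sq_nonneg L, hn',
      mul_le_mul_of_nonneg_left hSb2 (sq_nonneg L)]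
  have hC2 : (δ * ∑ i ∈ Finset.range n, ‖W (i+1) - ws‖)^2
      ≤ δ^2 * (n:ℝ) * ∑ i ∈ Finset.range n, ‖W (i+1) - ws‖^2 := by
    nlinarith [hSb2, sq_nonneg δ]
  -- combine
  have hfin1 : ‖gP ws - (1 / ((n:ℝ)+1)) • ∑ i ∈ Finset.range (n+1), V i‖^2
      ≤ (‖gP ws - vs‖ + (L / ((n:ℝ)+1)) * ∑ i ∈ Finset.range n, ‖W (i+1) - ws‖
          + δ * ∑ i ∈ Finset.range n, ‖W (i+1) - ws‖)^2 :=
    pow_le_pow_left₀ (norm_nonneg _) hnorm 2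
  have hfin2 : (‖gP ws - vs‖ + (L / ((n:ℝ)+1)) * ∑ i ∈ Finset.range n, ‖W (i+1) - ws‖
          + δ * ∑ i ∈ Finset.range n, ‖W (i+1) - ws‖)^2
      ≤ 2 * ‖gP ws - vs‖^2
        + 4 * ((L / ((n:ℝ)+1)) * ∑ i ∈ Finset.range n, ‖W (i+1) - ws‖)^2
        + 4 * (δ * ∑ i ∈ Finset.range n, ‖W (i+1) - ws‖)^2 := by
    nlinarith [sq_nonneg (‖gP ws - vs‖
        - (L / ((n:ℝ)+1)) * ∑ i ∈ Finset.range n, ‖W (i+1) - ws‖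
        - δ * ∑ i ∈ Finset.range n, ‖W (i+1) - ws‖),
      sq_nonneg ((L / ((n:ℝ)+1)) * ∑ i ∈ Finset.range n, ‖W (i+1) - ws‖
        - δ * ∑ i ∈ Finset.range n, ‖W (i+1) - ws‖)]
  have hrhs : (4 * L ^ 2 / ((n : ℝ) + 1) + 4 * δ ^ 2 * n)
          * ∑ i ∈ Finset.range n, ‖W (i + 1) - ws‖ ^ 2
        + (2 * L ^ 2 / (n : ℝ)) * ∑ i : Fin n, ‖Wprev i - ws‖ ^ 2
      = 2 * ((L^2 / (n:ℝ)) * ∑ i : Fin n, ‖Wprev i - ws‖^2)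
        + 4 * ((L^2 / ((n:ℝ)+1)) * ∑ i ∈ Finset.range n, ‖W (i+1) - ws‖^2)
        + 4 * (δ^2 * (n:ℝ) * ∑ i ∈ Finset.range n, ‖W (i+1) - ws‖^2) := by
    field_simp
    ring
  rw [hrhs]
  linarith [hfin1, hfin2, hA2, hB2, hC2]

/-- Combined variance bound in the proof of Theorem 1. -/
theorem combined_variance_bound
    {d n : ℕ} (hd : 1 ≤ d) (hn : 1 ≤ n)
    (f : Fin n → EuclideanSpace ℝ (Fin d) → ℝ)
    (P : EuclideanSpace ℝ (Fin d) → ℝ)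
    (hP : ∀ w, P w = (1 / (n : ℝ)) * ∑ i, f i w)
    (L δ : ℝ) (hL : 0 < L) (hδ : 0 < δ)
    (hdiff : ∀ i, Differentiable ℝ (f i))
    (hLip : ∀ i w₁ w₂, ‖gradient (f i) w₁ - gradient (f i) w₂‖ ≤ L * ‖w₁ - w₂‖)
    (hsim : ∀ i w₁ w₂,
      ‖(gradient (f i) w₁ - gradient P w₁) - (gradient (f i) w₂ - gradient P w₂)‖
        ≤ (δ / 2) * ‖w₁ - w₂‖)
    (π π' : Equiv.Perm (Fin n))
    -- points of the previous epoch and the aggregated direction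
    (Wprev : Fin n → EuclideanSpace ℝ (Fin d))
    (ws : EuclideanSpace ℝ (Fin d))
    (vs : EuclideanSpace ℝ (Fin d))
    (hvs : vs = (1 / (n : ℝ)) • ∑ i : Fin n, gradient (f (π i)) (Wprev i))
    -- arbitrary inner points `W 1, …, W n` with `W 0 = ws`, and the SARAH direction recursion
    (W V : ℕ → EuclideanSpace ℝ (Fin d))
    (hW0 : W 0 = ws) (hV0 : V 0 = vs)
    (hVrec : ∀ i : Fin n, V ((i : ℕ) + 1)
      = V i + gradient (f (π' i)) (W ((i : ℕ) + 1)) - gradient (f (π' i)) (W i)) :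
    ‖gradient P ws - (1 / ((n : ℝ) + 1)) • ∑ i ∈ Finset.range (n + 1), V i‖ ^ 2
      ≤ (4 * L ^ 2 / ((n : ℝ) + 1) + 4 * δ ^ 2 * n)
          * ∑ i ∈ Finset.range n, ‖W (i + 1) - ws‖ ^ 2
        + (2 * L ^ 2 / (n : ℝ)) * ∑ i : Fin n, ‖Wprev i - ws‖ ^ 2 := by
  have hPeq : P = fun w => (1 / (n : ℝ)) * ∑ i, f i w := funext hP
  have hgP : ∀ w, gradient P w = (1 / (n : ℝ)) • ∑ i, gradient (f i) w := by
    intro w; rw [hPeq]; exact gradient_avg_eq f hdiff w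
  exact core_variance_bound hn (fun i => gradient (f i)) (gradient P)
    L δ hL hδ hgP hLip hsim π π' Wprev ws vs hvs W V hW0 hV0 hVrec
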